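/- Let X be a complex Banach space and A, B bounded operators on X such that [A,B] = y ⊗ φ for a nonzero vector y ∈ X and a nonzero functional φ ∈ X*. If in addition the ranks of [A²,B], [A,B²], [A²,B²], and [AB,BA] are all at most 1, then φ(y) = 0, and consequently [A,B]² = 0. -/

import Mathlib

lemma aux_rank {X : Type*} [NormedAddCommGroup X] [NormedSpace ℂ X]
    (T : X →L[ℂ] X) (h : LinearMap.rank (T : X →ₗ[ℂ] X) ≤ 1) :
    ∃ v : X, ∀ x, ∃ c : ℂ, T x = c • v := by
  rw [LinearMap.rank] at h
  obtain ⟨v0, hv0⟩ := rank_le_one_iff.mp h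
  refine ⟨(v0 : X), fun x => ?_⟩
  obtain ⟨c, hc⟩ := hv0 ⟨T x, LinearMap.mem_range_self _ x⟩
  exact ⟨c, by simpa using congrArg Subtype.val hc.symm⟩

lemma aux_key {X : Type*} [NormedAddCommGroup X] [NormedSpace ℂ X]
    (T : X →L[ℂ] X) (u y : X) (f g : X →L[ℂ] ℂ) (hy : y ≠ 0) (hf : f ≠ 0)
    (hT : ∀ x, T x = f x • u + g x • y)
    (hr : LinearMap.rank (T : X →ₗ[ℂ] X) ≤ 1) :
    (∃ α : ℂ, u = α • y) ∨ (∃ α : ℂ, ∀ x, g x = α * f x) := by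
  by_contra hcon
  push_neg at hcon
  obtain ⟨hu, hg⟩ := hcon
  obtain ⟨x0, hx0⟩ : ∃ x, f x ≠ 0 := by
    by_contra h; push_neg at h; exact hf (ContinuousLinearMap.ext h)
  obtain ⟨x1, hx1⟩ := hg (g x0 / f x0)
  set x2 := x1 - (f x1 / f x0) • x0 with hx2def
  have hfx2 : f x2 = 0 := by
    simp only [hx2def, map_sub, map_smul, smul_eq_mul]
    field_simp
    ring
  have hgx2 : g x2 ≠ 0 := by
    simp only [hx2def, map_sub, map_smul, smul_eq_mul]
    intro h
    apply hx1
    have h2 : g x1 = f x1 / f x0 * g x0 := by linear_combination h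
    rw [h2]; field_simp
  obtain ⟨v, hv⟩ := aux_rank T hr
  obtain ⟨c2, hc2⟩ := hv x2
  obtain ⟨c1, hc1⟩ := hv x0
  rw [hT x2, hfx2] at hc2
  rw [hT x0] at hc1
  simp only [zero_smul, zero_add] at hc2
  -- hc2 : g x2 • y = c2 • v
  have hc2ne : c2 ≠ 0 := by
    intro h; rw [h, zero_smul] at hc2
    exact hy (by simpa [smul_eq_zero, hgx2] using hc2)
  have hvy : v = (g x2 / c2) • y := by
    have h2 : c2⁻¹ • (g x2 • y) = c2⁻¹ • (c2 • v) := by rw [hc2]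
    rw [smul_smul, smul_smul, inv_mul_cancel₀ hc2ne, one_smul, mul_comm] at h2
    rw [div_eq_mul_inv]; exact h2.symm.trans (by ring_nf)
  apply hu ((c1 * (g x2 / c2) - g x0) / f x0)
  have : f x0 • u = (c1 * (g x2 / c2) - g x0) • y := by
    have := hc1
    rw [hvy, smul_smul] at this
    have h2 : f x0 • u = (c1 * (g x2 / c2)) • y - g x0 • y := by
      rw [← this]; abel
    rw [h2, ← sub_smul]
  calc u = (f x0)⁻¹ • (f x0 • u) := by rw [smul_smul, inv_mul_cancel₀ hx0, one_smul]
    _ = ((c1 * (g x2 / c2) - g x0) / f x0) • y := by rw [this, smul_smul]; congr 1; field_simp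

theorem stmt_1 {X : Type*} [NormedAddCommGroup X] [NormedSpace ℂ X] [CompleteSpace X]
    (A B : X →L[ℂ] X) (y : X) (φ : X →L[ℂ] ℂ) (hy : y ≠ 0) (hφ : φ ≠ 0)
    (hAB : A * B - B * A = φ.smulRight y)
    (h1 : LinearMap.rank ((A ^ 2 * B - B * A ^ 2 : X →L[ℂ] X) : X →ₗ[ℂ] X) ≤ 1)
    (h2 : LinearMap.rank ((A * B ^ 2 - B ^ 2 * A : X →L[ℂ] X) : X →ₗ[ℂ] X) ≤ 1)
    (h3 : LinearMap.rank ((A ^ 2 * B ^ 2 - B ^ 2 * A ^ 2 : X →L[ℂ] X) : X →ₗ[ℂ] X) ≤ 1)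
    (h4 : LinearMap.rank (((A * B) * (B * A) - (B * A) * (A * B) : X →L[ℂ] X) : X →ₗ[ℂ] X) ≤ 1) :
    φ y = 0 ∧ (A * B - B * A) ^ 2 = 0 := by
  have hC : ∀ z, A (B z) = B (A z) + φ z • y := by
    intro z
    have h := congrArg (fun f : X →L[ℂ] X => f z) hAB
    simp only [ContinuousLinearMap.sub_apply, ContinuousLinearMap.mul_apply,
      ContinuousLinearMap.smulRight_apply] at h
    exact sub_eq_iff_eq_add'.mp h
  obtain ⟨x0, hx0⟩ : ∃ x, φ x ≠ 0 := by
    by_contra h; push_neg at h; exact hφ (ContinuousLinearMap.ext h)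
  have case1 : ∀ a b : ℂ, A y = a • y → B y = b • y → φ y = 0 := by
    intro a b ha hb
    have e1 : A (B y) = (b * a) • y := by rw [hb, map_smul, ha, smul_smul]
    have e2 : B (A y) = (b * a) • y := by rw [ha, map_smul, hb, smul_smul, mul_comm]
    have h := hC y
    rw [e1, e2] at h
    have hz : φ y • y = 0 := (left_eq_add.mp h)
    exact (smul_eq_zero.mp hz).resolve_right hy
  have case2 : ∀ a b : ℂ, (∀ x, φ (A x) = a * φ x) → (∀ x, φ (B x) = b * φ x) → φ y = 0 := by
    intro a b ha hb
    have h := congrArg φ (hC x0)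
    rw [map_add, map_smul, ha (B x0), hb x0, hb (A x0), ha x0, smul_eq_mul] at h
    have hz : φ x0 * φ y = 0 := by linear_combination -h
    exact (mul_eq_zero.mp hz).resolve_left hx0
  have hT1gen : ∀ x, A (A (B x)) = B (A (A x)) + φ x • A y + φ (A x) • y := by
    intro x
    rw [hC x, map_add, map_smul, hC (A x)]
    abel
  have hT2gen : ∀ x, A (B (B x)) = B (B (A x)) + φ x • B y + φ (B x) • y := by
    intro x
    rw [hC (B x), hC x, map_add, map_smul]
  have hdAfun : ∀ x, (A ^ 2 * B - B * A ^ 2) x = φ x • A y + (φ.comp A) x • y := by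
    intro x
    have e0 : (A ^ 2 * B - B * A ^ 2) x = A (A (B x)) - B (A (A x)) := by
      simp [pow_two, ContinuousLinearMap.mul_apply, ContinuousLinearMap.sub_apply]
    rw [e0, hT1gen x, ContinuousLinearMap.comp_apply]
    abel
  have hdBfun : ∀ x, (A * B ^ 2 - B ^ 2 * A) x = φ x • B y + (φ.comp B) x • y := by
    intro x
    have e0 : (A * B ^ 2 - B ^ 2 * A) x = A (B (B x)) - B (B (A x)) := by
      simp [pow_two, ContinuousLinearMap.mul_apply, ContinuousLinearMap.sub_apply]
    rw [e0, hT2gen x, ContinuousLinearMap.comp_apply]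
    abel
  have dA := aux_key _ (A y) y φ (φ.comp A) hy hφ hdAfun h1
  have dB := aux_key _ (B y) y φ (φ.comp B) hy hφ hdBfun h2
  have hφAB : ∀ x, φ (A (B x)) = φ (B (A x)) + φ y * φ x := by
    intro x
    have h := congrArg φ (hC x)
    rw [map_add, map_smul, smul_eq_mul] at h
    rw [h]; ring
  have hφy : φ y = 0 := by
    rcases dA with ⟨α, hα⟩ | ⟨α, hα'⟩ <;> rcases dB with ⟨β, hβ⟩ | ⟨β, hβ'⟩
    · exact case1 α β hα hβ
    · -- case PQ : A y = α • y, φ ∘ B = β φ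
      have hβ : ∀ x, φ (B x) = β * φ x := fun x => by simpa using hβ' x
      by_cases hPB : ∃ δ : ℂ, B y = δ • y
      · obtain ⟨δ, hδ⟩ := hPB; exact case1 α δ hα hδ
      by_cases hQA : ∃ γ : ℂ, ∀ x, φ (A x) = γ * φ x
      · obtain ⟨γ, hγ⟩ := hQA; exact case2 γ β hγ hβ
      set f : X →L[ℂ] ℂ := α • φ + φ.comp A with hfdef
      have hfapp : ∀ x, f x = α * φ x + φ (A x) := by
        intro x
        simp [hfdef, ContinuousLinearMap.add_apply, ContinuousLinearMap.smul_apply,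
          ContinuousLinearMap.comp_apply, smul_eq_mul]
      have hfne : f ≠ 0 := by
        intro h0
        apply hQA
        refine ⟨-α, fun x => ?_⟩
        have hx := congrArg (fun ψ : X →L[ℂ] ℂ => ψ x) h0
        simp only [ContinuousLinearMap.zero_apply] at hx
        rw [hfapp x] at hx
        linear_combination hx
      have hT3 : ∀ x, (A ^ 2 * B ^ 2 - B ^ 2 * A ^ 2) x = f x • (B y) + (f.comp B) x • y := by
        intro x
        have e0 : (A ^ 2 * B ^ 2 - B ^ 2 * A ^ 2) x = A (A (B (B x))) - B (B (A (A x))) := by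
          simp [pow_two, ContinuousLinearMap.mul_apply, ContinuousLinearMap.sub_apply]
        have e2 := congrArg B (hT1gen x)
        simp only [map_add, map_smul] at e2
        rw [e0, hT1gen (B x), e2, ContinuousLinearMap.comp_apply, hfapp x, hfapp (B x), hα,
          map_smul]
        match_scalars <;> ring
      have dich := aux_key _ (B y) y f (f.comp B) hy hfne hT3 h3
      rcases dich with ⟨δ, hδ⟩ | ⟨μ, hμ⟩
      · exact absurd ⟨δ, hδ⟩ hPB
      · have hμ' : ∀ x, α * φ (B x) + φ (A (B x)) = μ * (α * φ x + φ (A x)) := by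
          intro x
          have h := hμ x
          rw [ContinuousLinearMap.comp_apply, hfapp (B x), hfapp x] at h
          exact h
        by_cases hβμ : β = μ
        · subst hβμ
          have h5 := hμ' x0
          rw [hφAB x0, hβ x0, hβ (A x0)] at h5
          have hz : φ y * φ x0 = 0 := by linear_combination h5
          exact (mul_eq_zero.mp hz).resolve_right hx0
        · exfalso
          apply hQA
          refine ⟨(μ * α - α * β - φ y) / (β - μ), fun x => ?_⟩
          have h5 := hμ' x
          rw [hφAB x, hβ x, hβ (A x)] at h5
          have hbm : β - μ ≠ 0 := sub_ne_zero.mpr hβμ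
          field_simp
          linear_combination h5
    · -- case QP : φ ∘ A = α φ, B y = β • y
      have hα : ∀ x, φ (A x) = α * φ x := fun x => by simpa using hα' x
      by_cases hPA : ∃ δ : ℂ, A y = δ • y
      · obtain ⟨δ, hδ⟩ := hPA; exact case1 δ β hδ hβ
      by_cases hQB : ∃ γ : ℂ, ∀ x, φ (B x) = γ * φ x
      · obtain ⟨γ, hγ⟩ := hQB; exact case2 α γ hα hγ
      set f : X →L[ℂ] ℂ := β • φ + φ.comp B with hfdef
      have hfapp : ∀ x, f x = β * φ x + φ (B x) := by
        intro x
        simp [hfdef, ContinuousLinearMap.add_apply, ContinuousLinearMap.smul_apply,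
          ContinuousLinearMap.comp_apply, smul_eq_mul]
      have hfne : f ≠ 0 := by
        intro h0
        apply hQB
        refine ⟨-β, fun x => ?_⟩
        have hx := congrArg (fun ψ : X →L[ℂ] ℂ => ψ x) h0
        simp only [ContinuousLinearMap.zero_apply] at hx
        rw [hfapp x] at hx
        linear_combination hx
      have hT3 : ∀ x, (A ^ 2 * B ^ 2 - B ^ 2 * A ^ 2) x = f x • (A y) + (f.comp A) x • y := by
        intro x
        have e0 : (A ^ 2 * B ^ 2 - B ^ 2 * A ^ 2) x = A (A (B (B x))) - B (B (A (A x))) := by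
          simp [pow_two, ContinuousLinearMap.mul_apply, ContinuousLinearMap.sub_apply]
        have e2 := congrArg A (hT2gen x)
        simp only [map_add, map_smul] at e2
        rw [e0, e2, hT2gen (A x), ContinuousLinearMap.comp_apply, hfapp x, hfapp (A x), hβ,
          map_smul]
        match_scalars <;> ring
      have dich := aux_key _ (A y) y f (f.comp A) hy hfne hT3 h3
      rcases dich with ⟨δ, hδ⟩ | ⟨μ, hμ⟩
      · exact absurd ⟨δ, hδ⟩ hPA
      · have hμ' : ∀ x, β * φ (A x) + φ (B (A x)) = μ * (β * φ x + φ (B x)) := by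
          intro x
          have h := hμ x
          rw [ContinuousLinearMap.comp_apply, hfapp (A x), hfapp x] at h
          exact h
        have hφBA : ∀ x, φ (B (A x)) = α * φ (B x) - φ y * φ x := by
          intro x
          have h := hφAB x
          rw [hα (B x)] at h
          linear_combination -h
        by_cases hαμ : α = μ
        · subst hαμ
          have h5 := hμ' x0
          rw [hφBA x0, hα x0] at h5
          have hz : φ y * φ x0 = 0 := by linear_combination -h5
          exact (mul_eq_zero.mp hz).resolve_right hx0
        · exfalso
          apply hQB
          refine ⟨(μ * β - β * α + φ y) / (α - μ), fun x => ?_⟩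
          have h5 := hμ' x
          rw [hφBA x, hα x] at h5
          have ham : α - μ ≠ 0 := sub_ne_zero.mpr hαμ
          field_simp
          linear_combination h5
    · exact case2 α β (fun x => by simpa using hα' x) (fun x => by simpa using hβ' x)
  refine ⟨hφy, ?_⟩
  rw [hAB, pow_two]
  ext x
  simp [ContinuousLinearMap.mul_apply, ContinuousLinearMap.smulRight_apply, map_smul, hφy,
    smul_eq_mul]
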